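/- Let K be an n×n positive semidefinite Hermitian complex matrix, let X be a diagonal n×n complex matrix whose diagonal entries satisfy |x_k|² ≤ A² for all k (A > 0), and let σ² > 0. Then det(I + (1/σ²)·K·Xᴴ·X) ≤ det(I + (A²/σ²)·K), where Xᴴ denotes the conjugate transpose. -/

import Mathlib

open Matrix
open scoped ComplexOrder

private lemma aux_one_le_det {m : ℕ} {N : Matrix (Fin m) (Fin m) ℂ}
    (hN : N.PosSemidef) : (1 : ℂ) ≤ (1 + N).det := by
  set U : Matrix (Fin m) (Fin m) ℂ := (hN.1.eigenvectorUnitary : Matrix (Fin m) (Fin m) ℂ)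
    with hU
  have hU1 : U * star U = 1 := mem_unitaryGroup_iff.mp hN.1.eigenvectorUnitary.2
  have key : 1 + N = U * (1 + diagonal (RCLike.ofReal ∘ hN.1.eigenvalues)) * star U := by
    conv_lhs => rw [hN.1.spectral_theorem, Unitary.conjStarAlgAut_apply]
    rw [mul_add, add_mul, mul_one, hU1]
  have hdet : (1 + N).det
      = ((1 + diagonal (RCLike.ofReal ∘ hN.1.eigenvalues) : Matrix (Fin m) (Fin m) ℂ)).det := by
    rw [key, det_mul, det_mul, mul_comm U.det, mul_assoc, ← det_mul, hU1, det_one, mul_one]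
  rw [hdet]
  have h1 : (1 : Matrix (Fin m) (Fin m) ℂ) + diagonal (RCLike.ofReal ∘ hN.1.eigenvalues)
      = diagonal (fun i => 1 + ((hN.1.eigenvalues i : ℝ) : ℂ)) := by
    rw [← diagonal_one, diagonal_add]
    rfl
  rw [h1, det_diagonal]
  have h2 : (∏ i, ((1 : ℂ) + ((hN.1.eigenvalues i : ℝ) : ℂ)))
      = ((∏ i, (1 + hN.1.eigenvalues i) : ℝ) : ℂ) := by
    push_cast
    rfl
  rw [h2, ← Complex.ofReal_one, Complex.real_le_real]
  calc (1 : ℝ) = ∏ _i : Fin m, (1 : ℝ) := by simp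
    _ ≤ ∏ i, (1 + hN.1.eigenvalues i) := by
        refine Finset.prod_le_prod (fun i _ => zero_le_one) fun i _ => ?_
        have := hN.eigenvalues_nonneg i
        linarith

private lemma aux_det_mono {m : ℕ} {P N : Matrix (Fin m) (Fin m) ℂ}
    (hP : P.PosSemidef) (hN : N.PosSemidef) : (1 + P).det ≤ (1 + P + N).det := by
  have hR : (1 + P).PosDef := Matrix.PosDef.add_posSemidef Matrix.PosDef.one hP
  obtain ⟨C, hCps, hCC⟩ : ∃ C : Matrix (Fin m) (Fin m) ℂ, C.PosSemidef ∧ C * C = 1 + P :=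
    by open scoped MatrixOrder in exact ⟨CFC.sqrt (1 + P), (CFC.sqrt_nonneg _).posSemidef, CFC.sqrt_mul_sqrt_self _ hR.posSemidef.nonneg⟩
  have hdetR : 0 < (1 + P).det := hR.det_pos
  have hdetC : C.det ≠ 0 := by
    intro h
    have h2 : C.det * C.det = (1 + P).det := by rw [← det_mul, hCC]
    rw [h, mul_zero] at h2
    exact hdetR.ne' h2.symm
  have hdetCU : IsUnit C.det := isUnit_iff_ne_zero.mpr hdetC
  have hCi : C * C⁻¹ = 1 := mul_nonsing_inv C hdetCU
  have hCi' : C⁻¹ * C = 1 := nonsing_inv_mul C hdetCU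
  have hCiH : (C⁻¹)ᴴ = C⁻¹ := by rw [conjTranspose_nonsing_inv, hCps.1]
  have hN' : (C⁻¹ * N * C⁻¹).PosSemidef := by
    have := hN.mul_mul_conjTranspose_same C⁻¹
    rwa [hCiH] at this
  have key : 1 + P + N = C * (1 + C⁻¹ * N * C⁻¹) * C := by
    rw [mul_add, add_mul, mul_one, hCC]
    congr 1
    symm
    calc C * (C⁻¹ * N * C⁻¹) * C = (C * C⁻¹) * N * (C⁻¹ * C) := by
          simp only [mul_assoc]
      _ = N := by rw [hCi, hCi', one_mul, mul_one]
  have hdet : (1 + P + N).det = (1 + C⁻¹ * N * C⁻¹).det * (1 + P).det := by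
    rw [key, det_mul, det_mul, mul_comm C.det, mul_assoc, ← det_mul, hCC]
  rw [hdet]
  exact le_mul_of_one_le_left hdetR.le (aux_one_le_det hN')

/-- If `K` is PSD Hermitian, `X = diag(x)` with `|x k|² ≤ A²`, and `σ² > 0`, then
`det (I + (1/σ²) K Xᴴ X) ≤ det (I + (A²/σ²) K)`. -/
theorem stmt_12 (n : ℕ) (K : Matrix (Fin n) (Fin n) ℂ) (hK : K.PosSemidef)
    (x : Fin n → ℂ) (A : ℝ) (hA : 0 < A)
    (hx : ∀ k, ‖x k‖ ^ 2 ≤ A ^ 2) (σ2 : ℝ) (hσ : 0 < σ2) :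
    (1 + ((σ2 : ℂ)⁻¹) •
        (K * (Matrix.diagonal x)ᴴ * Matrix.diagonal x)).det ≤
      (1 + ((A ^ 2 / σ2 : ℝ) : ℂ) • K).det := by
  set c : ℂ := (σ2 : ℂ)⁻¹ with hc
  set d : Fin n → ℝ := fun k => ‖x k‖ with hd
  set S : Matrix (Fin n) (Fin n) ℂ := diagonal (fun k => (d k : ℂ)) with hS
  obtain ⟨B, hB, hBB⟩ : ∃ B : Matrix (Fin n) (Fin n) ℂ, B.PosSemidef ∧ B * B = K :=
    by open scoped MatrixOrder in exact ⟨CFC.sqrt K, (CFC.sqrt_nonneg _).posSemidef, CFC.sqrt_mul_sqrt_self _ hK.nonneg⟩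
  have hXS : (diagonal x)ᴴ * diagonal x = S * S := by
    rw [diagonal_conjTranspose, hS, diagonal_mul_diagonal, diagonal_mul_diagonal]
    refine congrArg diagonal (funext fun k => ?_)
    show star (x k) * x k = ((d k : ℂ)) * ((d k : ℂ))
    simp only [RCLike.star_def]
    rw [← Complex.normSq_eq_conj_mul_self, Complex.normSq_eq_norm_sq]
    push_cast [hd]
    ring
  have hcr : c = ((σ2⁻¹ : ℝ) : ℂ) := by rw [hc, Complex.ofReal_inv]
  have hSSdiag : c • (S * S) = diagonal (fun k => ((σ2⁻¹ * (d k * d k) : ℝ) : ℂ)) := by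
    rw [hS, diagonal_mul_diagonal, hcr, ← diagonal_smul]
    refine congrArg diagonal (funext fun k => ?_)
    simp only [Pi.smul_apply, smul_eq_mul]
    push_cast
    ring
  have hP : (B * (c • (S * S)) * B).PosSemidef := by
    have hdiag : (c • (S * S)).PosSemidef := by
      rw [hSSdiag]
      refine posSemidef_diagonal_iff.mpr fun k => ?_
      rw [Complex.zero_le_real]
      exact mul_nonneg (inv_nonneg.mpr hσ.le) (mul_self_nonneg _)
    have := hdiag.conjTranspose_mul_mul_same B
    rwa [hB.1] at this
  -- LHS determinant rewriting
  have e1 : (1 + c • (K * (diagonal x)ᴴ * diagonal x)).det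
      = (1 + B * (c • (S * S)) * B).det := by
    calc (1 + c • (K * (diagonal x)ᴴ * diagonal x)).det
        = (1 + (c • (K * S)) * S).det := by
          rw [mul_assoc, hXS, smul_mul_assoc, mul_assoc]
      _ = (1 + S * (c • (K * S))).det := det_one_add_mul_comm _ _
      _ = (1 + (c • (S * B)) * (B * S)).det := by
          rw [← hBB]
          congr 2
          simp only [smul_mul_assoc, mul_smul_comm, mul_assoc]
      _ = (1 + (B * S) * (c • (S * B))).det := det_one_add_mul_comm _ _
      _ = (1 + B * (c • (S * S)) * B).det := by
          congr 2
          simp only [smul_mul_assoc, mul_smul_comm, mul_assoc]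
  rw [e1]
  -- difference is PSD
  set Q : Matrix (Fin n) (Fin n) ℂ := ((A ^ 2 / σ2 : ℝ) : ℂ) • K with hQ
  have hE : ((A ^ 2 / σ2 : ℝ) : ℂ) • (1 : Matrix (Fin n) (Fin n) ℂ) - c • (S * S)
      = diagonal (fun k => (((A ^ 2 - d k ^ 2) / σ2 : ℝ) : ℂ)) := by
    rw [hSSdiag, ← diagonal_one, ← diagonal_smul, diagonal_sub]
    refine congrArg diagonal (funext fun k => ?_)
    simp only [Pi.smul_apply, smul_eq_mul, mul_one]
    push_cast
    field_simp
  have hNpsd : (Q - B * (c • (S * S)) * B).PosSemidef := by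
    have hdiag : (((A ^ 2 / σ2 : ℝ) : ℂ) • (1 : Matrix (Fin n) (Fin n) ℂ)
        - c • (S * S)).PosSemidef := by
      rw [hE]
      refine posSemidef_diagonal_iff.mpr fun k => ?_
      rw [Complex.zero_le_real]
      have h1 := hx k
      have h2 : 0 ≤ A ^ 2 - d k ^ 2 := by simp only [hd]; linarith
      positivity
    have key : Q - B * (c • (S * S)) * B
        = Bᴴ * (((A ^ 2 / σ2 : ℝ) : ℂ) • (1 : Matrix (Fin n) (Fin n) ℂ) - c • (S * S)) * B := by
      rw [hB.1, hQ, ← hBB]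
      simp only [mul_sub, sub_mul, mul_smul_comm, smul_mul_assoc, mul_one, one_mul, mul_assoc]
    rw [key]
    exact hdiag.conjTranspose_mul_mul_same _
  have hfin := aux_det_mono hP hNpsd
  rwa [add_assoc, add_sub_cancel] at hfin
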